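/- Let q be a positive integer, χ a Dirichlet character modulo q (extended by zero to integers not coprime to q), and λ: ℕ₊ → ℂ a function satisfying the Hecke relation λ(m)λ(n) = Σ_{d | gcd(m,n)} χ(d) λ(mn/d²) for all positive integers m, n. Then for every positive integer N, Σ_{(n₁,n₂,n₃,n₄): n₁n₂n₃n₄ = N} λ(n₁)λ(n₂)λ(n₃)λ(n₄) = Σ_{(b,c,d,j,n): bc·lcm(b,c)²·d²·j²·n = N} χ(j·lcm(b,c)·d) · μ(b)μ(c) τ(d·lcm(b,c)/b) τ(d·lcm(b,c)/c) τ(j) · λ(bcn) σ₄(n), where all sums are over ordered tuples of positive integers with the indicated product constraints. -/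

import Mathlib

open Finset ArithmeticFunction

/-- `sigma4 n` is the number of ordered quadruples of positive integers whose
product is `n` (the 4-fold divisor function `σ₄`). -/
def sigma4 (n : ℕ) : ℕ :=
  ((Finset.Icc 1 n ×ˢ Finset.Icc 1 n ×ˢ Finset.Icc 1 n ×ˢ Finset.Icc 1 n).filter
    (fun p => p.1 * p.2.1 * p.2.2.1 * p.2.2.2 = n)).card

lemma quad_filter (n : ℕ) (hn : 0 < n) :
    ((Finset.Icc 1 n ×ˢ Finset.Icc 1 n ×ˢ Finset.Icc 1 n ×ˢ Finset.Icc 1 n).filter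
      (fun p => p.1 * p.2.1 * p.2.2.1 * p.2.2.2 = n)) =
    ((n.divisors ×ˢ n.divisors ×ˢ n.divisors ×ˢ n.divisors).filter
      (fun p => p.1 * p.2.1 * p.2.2.1 * p.2.2.2 = n)) := by
  ext ⟨a, b, c, d⟩
  simp only [Finset.mem_filter, Finset.mem_product, Finset.mem_Icc, Nat.mem_divisors]
  constructor
  · rintro ⟨-, h⟩
    refine ⟨⟨⟨⟨b*c*d, by rw [← h]; ring⟩, hn.ne'⟩, ⟨⟨a*c*d, by rw [← h]; ring⟩, hn.ne'⟩,
      ⟨⟨a*b*d, by rw [← h]; ring⟩, hn.ne'⟩, ⟨⟨a*b*c, by rw [← h]; ring⟩, hn.ne'⟩⟩, h⟩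
  · rintro ⟨⟨⟨ha, -⟩, ⟨hb, -⟩, ⟨hc, -⟩, ⟨hd, -⟩⟩, h⟩
    exact ⟨⟨⟨Nat.pos_of_dvd_of_pos ha hn, Nat.le_of_dvd hn ha⟩,
      ⟨Nat.pos_of_dvd_of_pos hb hn, Nat.le_of_dvd hn hb⟩,
      ⟨Nat.pos_of_dvd_of_pos hc hn, Nat.le_of_dvd hn hc⟩,
      ⟨Nat.pos_of_dvd_of_pos hd hn, Nat.le_of_dvd hn hd⟩⟩, h⟩

lemma card_DA (n : ℕ) : (Nat.divisorsAntidiagonal n).card = n.divisors.card := by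
  rw [← Nat.image_fst_divisorsAntidiagonal]
  refine (Finset.card_image_of_injOn ?_).symm
  intro p hp q hq h
  rw [Finset.mem_coe, Nat.mem_divisorsAntidiagonal] at hp hq
  have hp1 : 0 < p.1 := by
    rcases Nat.eq_zero_or_pos p.1 with h0 | h0
    · exfalso; rw [h0] at hp; simp at hp; exact hp.2 hp.1.symm
    · exact h0
  have : p.2 = q.2 := Nat.eq_of_mul_eq_mul_left hp1 (by rw [hp.1, h, hq.1])
  exact Prod.ext h this

lemma sigma4_eq (n : ℕ) (hn : 0 < n) :
    sigma4 n = ∑ p ∈ Nat.divisorsAntidiagonal n, p.1.divisors.card * p.2.divisors.card := by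
  have hc : ∀ p ∈ Nat.divisorsAntidiagonal n, p.1.divisors.card * p.2.divisors.card
      = (Nat.divisorsAntidiagonal p.1 ×ˢ Nat.divisorsAntidiagonal p.2).card := by
    intro p _; rw [Finset.card_product, card_DA, card_DA]
  rw [Finset.sum_congr rfl hc]
  unfold sigma4
  rw [quad_filter n hn]
  simp only [Finset.card_eq_sum_ones]
  rw [Finset.sum_sigma']
  refine Finset.sum_nbij'
    (fun p : ℕ×ℕ×ℕ×ℕ => (⟨(p.1 * p.2.1, p.2.2.1 * p.2.2.2), ((p.1, p.2.1), (p.2.2.1, p.2.2.2))⟩ : (_ : ℕ×ℕ) × ((ℕ×ℕ)×(ℕ×ℕ))))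
    (fun s => (s.2.1.1, s.2.1.2, s.2.2.1, s.2.2.2)) ?_ ?_ ?_ ?_ ?_
  · rintro ⟨a, b, c, d⟩ hm
    simp only [Finset.mem_filter, Finset.mem_product, Nat.mem_divisors] at hm
    obtain ⟨-, h⟩ := hm
    have h4 : a * b * c * d ≠ 0 := h ▸ hn.ne'
    have ha : a ≠ 0 := by rintro rfl; simp at h4
    have hb : b ≠ 0 := by rintro rfl; simp at h4
    have hcc : c ≠ 0 := by rintro rfl; simp at h4
    have hd : d ≠ 0 := by rintro rfl; simp at h4
    simp only [Finset.mem_sigma, Nat.mem_divisorsAntidiagonal, Finset.mem_product]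
    exact ⟨⟨by rw [← h]; ring, hn.ne'⟩, ⟨trivial, Nat.mul_ne_zero ha hb⟩,
      ⟨trivial, Nat.mul_ne_zero hcc hd⟩⟩
  · rintro ⟨⟨m1, m2⟩, ⟨⟨a, b⟩, ⟨c, d⟩⟩⟩ hs
    simp only [Finset.mem_sigma, Nat.mem_divisorsAntidiagonal, Finset.mem_product] at hs
    obtain ⟨⟨hmn, -⟩, ⟨h1, -⟩, ⟨h2, -⟩⟩ := hs
    simp only [Finset.mem_filter, Finset.mem_product, Nat.mem_divisors]
    subst h1 h2
    refine ⟨⟨⟨⟨b*(c*d), by rw [← hmn]; ring⟩, hn.ne'⟩, ⟨⟨a*(c*d), by rw [← hmn]; ring⟩, hn.ne'⟩,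
      ⟨⟨d*(a*b), by rw [← hmn]; ring⟩, hn.ne'⟩, ⟨⟨c*(a*b), by rw [← hmn]; ring⟩, hn.ne'⟩⟩,
      by rw [← hmn]; ring⟩
  · rintro ⟨a, b, c, d⟩ _; rfl
  · rintro ⟨⟨m1, m2⟩, ⟨⟨a, b⟩, ⟨c, d⟩⟩⟩ hs
    simp only [Finset.mem_sigma, Nat.mem_divisorsAntidiagonal, Finset.mem_product] at hs
    obtain ⟨-, ⟨h1, -⟩, ⟨h2, -⟩⟩ := hs
    subst h1 h2; rfl
  · intro p _; rfl

lemma moebius_sum (n : ℕ) : (∑ b ∈ n.divisors, (moebius b : ℂ)) = if n = 1 then 1 else 0 := by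
  have h := congrArg (fun f : ArithmeticFunction ℤ => f n) moebius_mul_coe_zeta
  simp only [coe_mul_zeta_apply, one_apply] at h
  have h2 : ((∑ b ∈ n.divisors, moebius b : ℤ) : ℂ) = ((if n = 1 then 1 else 0 : ℤ) : ℂ) :=
    congrArg _ h
  push_cast at h2
  convert h2 using 2

lemma moebius_sumZ (n : ℕ) : (∑ b ∈ n.divisors, (moebius b : ℤ)) = if n = 1 then 1 else 0 := by
  have h := congrArg (fun f : ArithmeticFunction ℤ => f n) moebius_mul_coe_zeta
  simp only [coe_mul_zeta_apply, one_apply] at h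
  exact h

lemma divisor_count_mul (f x : ℕ) (hf : 0 < f) (hx : 0 < x) :
    ((f * x).divisors.card : ℤ)
      = ∑ b ∈ (Nat.gcd f x).divisors,
          (moebius b : ℤ) * (f / b).divisors.card * (x / b).divisors.card := by
  have step1 : ∀ b ∈ (Nat.gcd f x).divisors,
      (moebius b : ℤ) * (f / b).divisors.card * (x / b).divisors.card
        = ∑ p ∈ (f / b).divisors ×ˢ (x / b).divisors, (moebius b : ℤ) := by
    intro b _
    rw [Finset.sum_const, Finset.card_product, nsmul_eq_mul]
    push_cast; ring
  rw [Finset.sum_congr rfl step1, Finset.sum_sigma']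
  have step2 : (∑ s ∈ ((Nat.gcd f x).divisors.sigma
        (fun b => (f / b).divisors ×ˢ (x / b).divisors)), (moebius s.1 : ℤ))
      = ∑ p ∈ f.divisors ×ˢ x.divisors,
          ∑ b ∈ (Nat.gcd (f / p.1) p.2).divisors, (moebius b : ℤ) := by
    rw [Finset.sum_sigma']
    refine Finset.sum_nbij' (fun s => (⟨(s.2.1, s.1 * s.2.2), s.1⟩ : (_ : ℕ × ℕ) × ℕ))
      (fun t => (⟨t.2, (t.1.1, t.1.2 / t.2)⟩ : (_ : ℕ) × (ℕ × ℕ))) ?_ ?_ ?_ ?_ ?_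
    · rintro ⟨b, u, w⟩ hs
      simp only [Finset.mem_sigma, Finset.mem_product, Nat.mem_divisors] at hs ⊢
      obtain ⟨⟨hbg, -⟩, ⟨hu, hfb⟩, ⟨hw, hxb⟩⟩ := hs
      have hbf : b ∣ f := hbg.trans (Nat.gcd_dvd_left f x)
      have hbx : b ∣ x := hbg.trans (Nat.gcd_dvd_right f x)
      have huf : u ∣ f := hu.trans (Nat.div_dvd_of_dvd hbf)
      have hbwx : b * w ∣ x := (Nat.dvd_div_iff_mul_dvd hbx).mp hw
      have hbu : b * u ∣ f := (Nat.dvd_div_iff_mul_dvd hbf).mp hu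
      have hbfu : b ∣ f / u := (Nat.dvd_div_iff_mul_dvd huf).mpr (by rwa [mul_comm] at hbu)
      have hfu : f / u ≠ 0 :=
        (Nat.div_pos (Nat.le_of_dvd hf huf) (Nat.pos_of_dvd_of_pos huf hf)).ne'
      exact ⟨⟨⟨huf, hf.ne'⟩, hbwx, hx.ne'⟩, Nat.dvd_gcd hbfu (dvd_mul_right b w),
        fun h0 => hfu (Nat.eq_zero_of_gcd_eq_zero_left h0)⟩
    · rintro ⟨⟨u, v⟩, b⟩ ht
      simp only [Finset.mem_sigma, Finset.mem_product, Nat.mem_divisors] at ht ⊢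
      obtain ⟨⟨⟨huf, -⟩, hvx, -⟩, hbg, hg0⟩ := ht
      have hbfu : b ∣ f / u := hbg.trans (Nat.gcd_dvd_left _ _)
      have hbv : b ∣ v := hbg.trans (Nat.gcd_dvd_right _ _)
      have hbx : b ∣ x := hbv.trans hvx
      have hbf : b ∣ f := hbfu.trans (Nat.div_dvd_of_dvd huf)
      have hb0 : b ≠ 0 := fun h0 => by
        subst h0; exact hg0 (Nat.eq_zero_of_zero_dvd hbg ▸ rfl)
      refine ⟨⟨Nat.dvd_gcd hbf hbx, fun h0 => hf.ne' (Nat.eq_zero_of_gcd_eq_zero_left h0)⟩,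
        ⟨?_, ?_⟩, ?_, ?_⟩
      · exact (Nat.dvd_div_iff_mul_dvd hbf).mpr
          (by rw [mul_comm]; exact (Nat.dvd_div_iff_mul_dvd huf).mp hbfu)
      · exact (Nat.div_pos (Nat.le_of_dvd hf hbf) (Nat.pos_of_ne_zero hb0)).ne'
      · exact (Nat.dvd_div_iff_mul_dvd hbx).mpr (by rw [Nat.mul_div_cancel' hbv]; exact hvx)
      · exact (Nat.div_pos (Nat.le_of_dvd hx hbx) (Nat.pos_of_ne_zero hb0)).ne'
    · rintro ⟨b, u, w⟩ hs
      simp only [Finset.mem_sigma, Finset.mem_product, Nat.mem_divisors] at hs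
      have hb0 : b ≠ 0 := fun h0 => by
        subst h0; exact hs.1.2 (Nat.eq_zero_of_zero_dvd hs.1.1 ▸ rfl)
      have : b * w / b = w := Nat.mul_div_cancel_left w (Nat.pos_of_ne_zero hb0)
      simp only [this]
    · rintro ⟨⟨u, v⟩, b⟩ ht
      simp only [Finset.mem_sigma, Finset.mem_product, Nat.mem_divisors] at ht
      have hbv : b ∣ v := ht.2.1.trans (Nat.gcd_dvd_right _ _)
      have : b * (v / b) = v := Nat.mul_div_cancel' hbv
      simp only [this]
    · intro s _; rfl
  rw [step2]
  have step3 : ∀ p ∈ f.divisors ×ˢ x.divisors,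
      (∑ b ∈ (Nat.gcd (f / p.1) p.2).divisors, (moebius b : ℤ))
        = if Nat.gcd (f / p.1) p.2 = 1 then (1 : ℤ) else 0 := fun p _ => moebius_sumZ _
  rw [Finset.sum_congr rfl step3, Finset.sum_boole]
  congr 1
  refine (Finset.card_nbij' (fun p => p.1 * p.2)
    (fun d => (Nat.gcd d f, d / Nat.gcd d f)) ?_ ?_ ?_ ?_).symm
  · rintro ⟨u, v⟩ hp
    change (u, v) ∈ (f.divisors ×ˢ x.divisors).filter (fun p => Nat.gcd (f / p.1) p.2 = 1) at hp
    simp only [Finset.mem_coe, Finset.mem_filter, Finset.mem_product, Nat.mem_divisors] at hp ⊢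
    obtain ⟨⟨⟨huf, -⟩, hvx, -⟩, -⟩ := hp
    exact ⟨mul_dvd_mul huf hvx, (Nat.mul_pos hf hx).ne'⟩
  · intro d hd
    simp only [Finset.mem_coe, Nat.mem_divisors] at hd
    obtain ⟨hdfx, -⟩ := hd
    have hg : 0 < Nat.gcd d f := Nat.gcd_pos_of_pos_right d hf
    simp only [Finset.mem_coe, Finset.mem_filter, Finset.mem_product, Nat.mem_divisors]
    have hco : Nat.Coprime (d / Nat.gcd d f) (f / Nat.gcd d f) :=
      Nat.coprime_div_gcd_div_gcd hg
    have h1 : d / Nat.gcd d f ∣ (f / Nat.gcd d f) * x :=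
      (Nat.div_dvd_iff_dvd_mul (Nat.gcd_dvd_left d f) hg).mpr
        (by rw [← mul_assoc, Nat.mul_div_cancel' (Nat.gcd_dvd_right d f)]; exact hdfx)
    have hdx : d / Nat.gcd d f ∣ x := hco.dvd_of_dvd_mul_left h1
    exact ⟨⟨⟨Nat.gcd_dvd_right d f, hf.ne'⟩, hdx, hx.ne'⟩,
      (Nat.coprime_div_gcd_div_gcd hg).symm⟩
  · rintro ⟨u, v⟩ hp
    change (u, v) ∈ (f.divisors ×ˢ x.divisors).filter (fun p => Nat.gcd (f / p.1) p.2 = 1) at hp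
    simp only [Finset.mem_filter, Finset.mem_product, Nat.mem_divisors] at hp
    obtain ⟨⟨⟨huf, -⟩, hvx, hx0⟩, hco⟩ := hp
    have hu0 : 0 < u := Nat.pos_of_dvd_of_pos huf hf
    have h1 : u ∣ Nat.gcd (u * v) f := Nat.dvd_gcd (dvd_mul_right u v) huf
    have h2 : Nat.gcd (u * v) f / u ∣ v := by
      rw [Nat.div_dvd_iff_dvd_mul h1 hu0]
      exact Nat.gcd_dvd_left _ _
    have h3 : Nat.gcd (u * v) f / u ∣ f / u := by
      rw [Nat.div_dvd_iff_dvd_mul h1 hu0, Nat.mul_div_cancel' huf]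
      exact Nat.gcd_dvd_right _ _
    have h4 : Nat.gcd (u * v) f / u = 1 := Nat.dvd_one.mp (hco ▸ Nat.dvd_gcd h3 h2)
    have hg : Nat.gcd (u * v) f = u := by
      rw [← Nat.mul_div_cancel' h1, h4, mul_one]
    show ((u * v).gcd f, (u * v) / (u * v).gcd f) = (u, v)
    rw [hg, Nat.mul_div_cancel_left v hu0]
  · intro d hd
    show d.gcd f * (d / d.gcd f) = d
    exact Nat.mul_div_cancel' (Nat.gcd_dvd_left d f)

lemma div_sq (d u v : ℕ) (hd : 0 < d) : (d * u) * (d * v) / d ^ 2 = u * v := by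
  rw [pow_two, show (d * u) * (d * v) = (d * d) * (u * v) by ring]
  exact Nat.mul_div_cancel_left _ (Nat.mul_pos hd hd)

lemma stepA (q : ℕ) (χ : DirichletCharacter ℂ q) (lam : ℕ → ℂ)
    (hHecke : ∀ m n : ℕ, 0 < m → 0 < n →
      lam m * lam n = ∑ d ∈ (Nat.gcd m n).divisors, χ (d : ZMod q) * lam (m * n / d ^ 2))
    (N : ℕ) (hN : 0 < N) :
    ∑ p ∈ (N.divisors ×ˢ N.divisors ×ˢ N.divisors ×ˢ N.divisors).filter
        (fun p => p.1 * p.2.1 * p.2.2.1 * p.2.2.2 = N),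
      lam p.1 * lam p.2.1 * lam p.2.2.1 * lam p.2.2.2 =
    ∑ p ∈ (N.divisors ×ˢ N.divisors ×ˢ N.divisors ×ˢ N.divisors ×ˢ N.divisors ×ˢ N.divisors).filter
        (fun p : ℕ × ℕ × ℕ × ℕ × ℕ × ℕ =>
          p.1 * p.1 * p.2.1 * p.2.2.1 * p.2.2.2.1 * p.2.2.2.1 * p.2.2.2.2.1 * p.2.2.2.2.2 = N),
      χ (p.1 : ZMod q) * χ (p.2.2.2.1 : ZMod q) * lam (p.2.1 * p.2.2.1)
        * lam (p.2.2.2.2.1 * p.2.2.2.2.2) := by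
  have expand : ∀ p ∈ (N.divisors ×ˢ N.divisors ×ˢ N.divisors ×ˢ N.divisors).filter
      (fun p => p.1 * p.2.1 * p.2.2.1 * p.2.2.2 = N),
      lam p.1 * lam p.2.1 * lam p.2.2.1 * lam p.2.2.2
        = ∑ d ∈ (Nat.gcd p.1 p.2.1).divisors ×ˢ (Nat.gcd p.2.2.1 p.2.2.2).divisors,
            χ (d.1 : ZMod q) * χ (d.2 : ZMod q) * lam (p.1 * p.2.1 / d.1 ^ 2)
              * lam (p.2.2.1 * p.2.2.2 / d.2 ^ 2) := by
    rintro ⟨n1, n2, n3, n4⟩ hp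
    simp only [Finset.mem_filter, Finset.mem_product, Nat.mem_divisors] at hp
    obtain ⟨⟨⟨h1, -⟩, ⟨h2, -⟩, ⟨h3, -⟩, ⟨h4, -⟩⟩, -⟩ := hp
    have p1 := Nat.pos_of_dvd_of_pos h1 hN
    have p2 := Nat.pos_of_dvd_of_pos h2 hN
    have p3 := Nat.pos_of_dvd_of_pos h3 hN
    have p4 := Nat.pos_of_dvd_of_pos h4 hN
    rw [show lam n1 * lam n2 * lam n3 * lam n4 = (lam n1 * lam n2) * (lam n3 * lam n4) by ring,
      hHecke n1 n2 p1 p2, hHecke n3 n4 p3 p4, Finset.sum_mul_sum]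
    rw [← Finset.sum_product']
    exact Finset.sum_congr rfl (fun d _ => by ring)
  rw [Finset.sum_congr rfl expand, Finset.sum_sigma']
  refine Finset.sum_nbij'
    (fun s => (s.2.1, s.1.1 / s.2.1, s.1.2.1 / s.2.1, s.2.2, s.1.2.2.1 / s.2.2, s.1.2.2.2 / s.2.2))
    (fun p => ⟨(p.1 * p.2.1, p.1 * p.2.2.1, p.2.2.2.1 * p.2.2.2.2.1,
        p.2.2.2.1 * p.2.2.2.2.2), (p.1, p.2.2.2.1)⟩) ?_ ?_ ?_ ?_ ?_
  · rintro ⟨⟨n1, n2, n3, n4⟩, d1, d2⟩ hs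
    simp only [Finset.mem_sigma, Finset.mem_filter, Finset.mem_product, Nat.mem_divisors] at hs ⊢
    obtain ⟨⟨⟨⟨h1, -⟩, ⟨h2, -⟩, ⟨h3, -⟩, ⟨h4, -⟩⟩, hprod⟩, ⟨hd1, -⟩, ⟨hd2, -⟩⟩ := hs
    have hd11 : d1 ∣ n1 := hd1.trans (Nat.gcd_dvd_left _ _)
    have hd12 : d1 ∣ n2 := hd1.trans (Nat.gcd_dvd_right _ _)
    have hd21 : d2 ∣ n3 := hd2.trans (Nat.gcd_dvd_left _ _)
    have hd22 : d2 ∣ n4 := hd2.trans (Nat.gcd_dvd_right _ _)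
    have e1 : d1 * (n1 / d1) = n1 := Nat.mul_div_cancel' hd11
    have e2 : d1 * (n2 / d1) = n2 := Nat.mul_div_cancel' hd12
    have e3 : d2 * (n3 / d2) = n3 := Nat.mul_div_cancel' hd21
    have e4 : d2 * (n4 / d2) = n4 := Nat.mul_div_cancel' hd22
    refine ⟨⟨⟨hd11.trans h1, hN.ne'⟩, ⟨(Nat.div_dvd_of_dvd hd11).trans h1, hN.ne'⟩,
      ⟨(Nat.div_dvd_of_dvd hd12).trans h2, hN.ne'⟩, ⟨hd21.trans h3, hN.ne'⟩,
      ⟨(Nat.div_dvd_of_dvd hd21).trans h3, hN.ne'⟩,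
      ⟨(Nat.div_dvd_of_dvd hd22).trans h4, hN.ne'⟩⟩, ?_⟩
    rw [show d1 * d1 * (n1 / d1) * (n2 / d1) * d2 * d2 * (n3 / d2) * (n4 / d2)
        = (d1 * (n1 / d1)) * (d1 * (n2 / d1)) * (d2 * (n3 / d2)) * (d2 * (n4 / d2)) by ring,
      e1, e2, e3, e4]
    exact hprod
  · rintro ⟨a, u, v, e, s, t⟩ hp
    simp only [Finset.mem_filter, Finset.mem_product, Nat.mem_divisors] at hp
    obtain ⟨⟨⟨ha, -⟩, ⟨hu, -⟩, ⟨hv, -⟩, ⟨he, -⟩, ⟨hs', -⟩, ⟨ht, -⟩⟩, hprod⟩ := hp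
    simp only [Finset.mem_sigma, Finset.mem_filter, Finset.mem_product, Nat.mem_divisors]
    have pa := Nat.pos_of_dvd_of_pos ha hN
    have pu := Nat.pos_of_dvd_of_pos hu hN
    have pv := Nat.pos_of_dvd_of_pos hv hN
    have pe := Nat.pos_of_dvd_of_pos he hN
    have ps := Nat.pos_of_dvd_of_pos hs' hN
    have pt := Nat.pos_of_dvd_of_pos ht hN
    refine ⟨⟨⟨⟨⟨a * v * e * e * s * t, by rw [← hprod]; ring⟩, hN.ne'⟩,
      ⟨⟨a * u * e * e * s * t, by rw [← hprod]; ring⟩, hN.ne'⟩,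
      ⟨⟨a * a * u * v * e * t, by rw [← hprod]; ring⟩, hN.ne'⟩,
      ⟨⟨a * a * u * v * e * s, by rw [← hprod]; ring⟩, hN.ne'⟩⟩,
      by rw [← hprod]; ring⟩, ⟨Nat.dvd_gcd ⟨u, rfl⟩ ⟨v, rfl⟩, ?_⟩,
      ⟨Nat.dvd_gcd ⟨s, rfl⟩ ⟨t, rfl⟩, ?_⟩⟩
    · exact fun h0 => (Nat.mul_pos pa pu).ne'
        (Nat.eq_zero_of_gcd_eq_zero_left h0)
    · exact fun h0 => (Nat.mul_pos pe ps).ne'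
        (Nat.eq_zero_of_gcd_eq_zero_left h0)
  · rintro ⟨⟨n1, n2, n3, n4⟩, d1, d2⟩ hs
    simp only [Finset.mem_sigma, Finset.mem_filter, Finset.mem_product, Nat.mem_divisors] at hs
    obtain ⟨-, ⟨hd1, -⟩, ⟨hd2, -⟩⟩ := hs
    have e1 := Nat.mul_div_cancel' (hd1.trans (Nat.gcd_dvd_left n1 n2))
    have e2 := Nat.mul_div_cancel' (hd1.trans (Nat.gcd_dvd_right n1 n2))
    have e3 := Nat.mul_div_cancel' (hd2.trans (Nat.gcd_dvd_left n3 n4))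
    have e4 := Nat.mul_div_cancel' (hd2.trans (Nat.gcd_dvd_right n3 n4))
    simp only [e1, e2, e3, e4]
  · rintro ⟨a, u, v, e, s, t⟩ hp
    simp only [Finset.mem_filter, Finset.mem_product, Nat.mem_divisors] at hp
    obtain ⟨⟨⟨ha, -⟩, ⟨hu, -⟩, ⟨hv, -⟩, ⟨he, -⟩, -, -⟩, -⟩ := hp
    have pa := Nat.pos_of_dvd_of_pos ha hN
    have pe := Nat.pos_of_dvd_of_pos he hN
    simp only [Nat.mul_div_cancel_left _ pa, Nat.mul_div_cancel_left _ pe]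
  · rintro ⟨⟨n1, n2, n3, n4⟩, d1, d2⟩ hs
    simp only [Finset.mem_sigma, Finset.mem_filter, Finset.mem_product, Nat.mem_divisors] at hs
    obtain ⟨⟨-, -⟩, ⟨hd1, hg1⟩, ⟨hd2, hg2⟩⟩ := hs
    have hd11 : d1 ∣ n1 := hd1.trans (Nat.gcd_dvd_left _ _)
    have hd12 : d1 ∣ n2 := hd1.trans (Nat.gcd_dvd_right _ _)
    have hd21 : d2 ∣ n3 := hd2.trans (Nat.gcd_dvd_left _ _)
    have hd22 : d2 ∣ n4 := hd2.trans (Nat.gcd_dvd_right _ _)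
    have pd1 : 0 < d1 := Nat.pos_of_mem_divisors (Nat.mem_divisors.mpr ⟨hd1, hg1⟩)
    have pd2 : 0 < d2 := Nat.pos_of_mem_divisors (Nat.mem_divisors.mpr ⟨hd2, hg2⟩)
    have e1 : n1 * n2 / d1 ^ 2 = (n1 / d1) * (n2 / d1) := by
      conv_lhs => rw [← Nat.mul_div_cancel' hd11, ← Nat.mul_div_cancel' hd12]
      exact div_sq d1 _ _ pd1
    have e2 : n3 * n4 / d2 ^ 2 = (n3 / d2) * (n4 / d2) := by
      conv_lhs => rw [← Nat.mul_div_cancel' hd21, ← Nat.mul_div_cancel' hd22]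
      exact div_sq d2 _ _ pd2
    simp only [e1, e2]

lemma stepB (q : ℕ) (χ : DirichletCharacter ℂ q) (lam : ℕ → ℂ) (N : ℕ) (hN : 0 < N) :
    ∑ p ∈ (N.divisors ×ˢ N.divisors ×ˢ N.divisors ×ˢ N.divisors).filter
        (fun p : ℕ × ℕ × ℕ × ℕ => p.1 * p.1 * p.2.1 * p.2.2.1 * p.2.2.1 * p.2.2.2 = N),
      χ (p.1 : ZMod q) * χ (p.2.2.1 : ZMod q) * (p.2.1.divisors.card : ℂ)
        * (p.2.2.2.divisors.card : ℂ) * (lam p.2.1 * lam p.2.2.2) =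
    ∑ p ∈ (N.divisors ×ˢ N.divisors ×ˢ N.divisors ×ˢ N.divisors ×ˢ N.divisors ×ˢ N.divisors).filter
        (fun p : ℕ × ℕ × ℕ × ℕ × ℕ × ℕ =>
          p.1 * p.1 * p.2.1 * p.2.2.1 * p.2.2.2.1 * p.2.2.2.1 * p.2.2.2.2.1 * p.2.2.2.2.2 = N),
      χ (p.1 : ZMod q) * χ (p.2.2.2.1 : ZMod q) * lam (p.2.1 * p.2.2.1)
        * lam (p.2.2.2.2.1 * p.2.2.2.2.2) := by
  have expand : ∀ p ∈ (N.divisors ×ˢ N.divisors ×ˢ N.divisors ×ˢ N.divisors).filter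
      (fun p : ℕ × ℕ × ℕ × ℕ => p.1 * p.1 * p.2.1 * p.2.2.1 * p.2.2.1 * p.2.2.2 = N),
      χ (p.1 : ZMod q) * χ (p.2.2.1 : ZMod q) * (p.2.1.divisors.card : ℂ)
          * (p.2.2.2.divisors.card : ℂ) * (lam p.2.1 * lam p.2.2.2)
        = ∑ w ∈ Nat.divisorsAntidiagonal p.2.1 ×ˢ Nat.divisorsAntidiagonal p.2.2.2,
            χ (p.1 : ZMod q) * χ (p.2.2.1 : ZMod q) * (lam p.2.1 * lam p.2.2.2) := by
    intro p _
    rw [Finset.sum_const, Finset.card_product, card_DA, card_DA, nsmul_eq_mul]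
    push_cast; ring
  rw [Finset.sum_congr rfl expand, Finset.sum_sigma']
  refine Finset.sum_nbij'
    (fun s => (s.1.1, s.2.1.1, s.2.1.2, s.1.2.2.1, s.2.2.1, s.2.2.2))
    (fun p => ⟨(p.1, p.2.1 * p.2.2.1, p.2.2.2.1, p.2.2.2.2.1 * p.2.2.2.2.2),
      ((p.2.1, p.2.2.1), (p.2.2.2.2.1, p.2.2.2.2.2))⟩) ?_ ?_ ?_ ?_ ?_
  · rintro ⟨⟨a, m, e, m'⟩, ⟨u, v⟩, ⟨s, t⟩⟩ hs
    simp only [Finset.mem_sigma, Finset.mem_filter, Finset.mem_product, Nat.mem_divisors,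
      Nat.mem_divisorsAntidiagonal] at hs ⊢
    obtain ⟨⟨⟨⟨ha, -⟩, ⟨hm, -⟩, ⟨he, -⟩, ⟨hm', -⟩⟩, hprod⟩, ⟨huv, -⟩, ⟨hst, -⟩⟩ := hs
    subst huv hst
    refine ⟨⟨⟨ha, hN.ne'⟩, ⟨dvd_trans ⟨v, rfl⟩ hm, hN.ne'⟩, ⟨dvd_trans ⟨u, mul_comm u v⟩ hm, hN.ne'⟩,
      ⟨he, hN.ne'⟩, ⟨dvd_trans ⟨t, rfl⟩ hm', hN.ne'⟩, ⟨dvd_trans ⟨s, mul_comm s t⟩ hm', hN.ne'⟩⟩,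
      by rw [← hprod]; ring⟩
  · rintro ⟨a, u, v, e, s, t⟩ hp
    simp only [Finset.mem_filter, Finset.mem_product, Nat.mem_divisors] at hp
    obtain ⟨⟨⟨ha, -⟩, ⟨hu, -⟩, ⟨hv, -⟩, ⟨he, -⟩, ⟨hs', -⟩, ⟨ht, -⟩⟩, hprod⟩ := hp
    have pu := Nat.pos_of_dvd_of_pos hu hN
    have pv := Nat.pos_of_dvd_of_pos hv hN
    have ps := Nat.pos_of_dvd_of_pos hs' hN
    have pt := Nat.pos_of_dvd_of_pos ht hN
    simp only [Finset.mem_sigma, Finset.mem_filter, Finset.mem_product, Nat.mem_divisors,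
      Nat.mem_divisorsAntidiagonal]
    exact ⟨⟨⟨⟨ha, hN.ne'⟩, ⟨⟨a * a * e * e * s * t, by rw [← hprod]; ring⟩, hN.ne'⟩, ⟨he, hN.ne'⟩,
      ⟨⟨a * a * u * v * e * e, by rw [← hprod]; ring⟩, hN.ne'⟩⟩, by rw [← hprod]; ring⟩,
      ⟨trivial, (Nat.mul_pos pu pv).ne'⟩, ⟨trivial, (Nat.mul_pos ps pt).ne'⟩⟩
  · rintro ⟨⟨a, m, e, m'⟩, ⟨u, v⟩, ⟨s, t⟩⟩ hs
    simp only [Finset.mem_sigma, Finset.mem_filter, Finset.mem_product, Nat.mem_divisors,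
      Nat.mem_divisorsAntidiagonal] at hs
    obtain ⟨-, ⟨huv, -⟩, ⟨hst, -⟩⟩ := hs
    subst huv hst; rfl
  · rintro ⟨a, u, v, e, s, t⟩ _; rfl
  · rintro ⟨⟨a, m, e, m'⟩, ⟨u, v⟩, ⟨s, t⟩⟩ hs
    simp only [Finset.mem_sigma, Finset.mem_filter, Finset.mem_product, Nat.mem_divisors,
      Nat.mem_divisorsAntidiagonal] at hs
    obtain ⟨-, ⟨huv, -⟩, ⟨hst, -⟩⟩ := hs
    subst huv hst
    simp only []
    ring

lemma div_sq' (d u v : ℕ) (hd : 0 < d) : (d * u) * (d * v) / d ^ 2 = u * v := by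
  rw [pow_two, show (d * u) * (d * v) = (d * d) * (u * v) by ring]
  exact Nat.mul_div_cancel_left _ (Nat.mul_pos hd hd)

lemma stepC (q : ℕ) (χ : DirichletCharacter ℂ q) (lam : ℕ → ℂ)
    (hHecke : ∀ m n : ℕ, 0 < m → 0 < n →
      lam m * lam n = ∑ d ∈ (Nat.gcd m n).divisors, χ (d : ZMod q) * lam (m * n / d ^ 2))
    (N : ℕ) (hN : 0 < N) :
    ∑ p ∈ (N.divisors ×ˢ N.divisors ×ˢ N.divisors ×ˢ N.divisors).filter
        (fun p : ℕ × ℕ × ℕ × ℕ => p.1 * p.1 * p.2.1 * p.2.2.1 * p.2.2.1 * p.2.2.2 = N),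
      χ (p.1 : ZMod q) * χ (p.2.2.1 : ZMod q) * (p.2.1.divisors.card : ℂ)
        * (p.2.2.2.divisors.card : ℂ) * (lam p.2.1 * lam p.2.2.2) =
    ∑ p ∈ (N.divisors ×ˢ N.divisors ×ˢ N.divisors ×ˢ N.divisors ×ˢ N.divisors).filter
        (fun p : ℕ × ℕ × ℕ × ℕ × ℕ =>
          p.1 * p.1 * p.2.1 * p.2.1 * p.2.2.1 * p.2.2.1 * p.2.2.2.1 * p.2.2.2.2 = N),
      χ (p.1 : ZMod q) * χ (p.2.1 : ZMod q) * χ (p.2.2.1 : ZMod q)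
        * ((p.2.2.1 * p.2.2.2.1).divisors.card : ℂ) * ((p.2.2.1 * p.2.2.2.2).divisors.card : ℂ)
        * lam (p.2.2.2.1 * p.2.2.2.2) := by
  have expand : ∀ p ∈ (N.divisors ×ˢ N.divisors ×ˢ N.divisors ×ˢ N.divisors).filter
      (fun p : ℕ × ℕ × ℕ × ℕ => p.1 * p.1 * p.2.1 * p.2.2.1 * p.2.2.1 * p.2.2.2 = N),
      χ (p.1 : ZMod q) * χ (p.2.2.1 : ZMod q) * (p.2.1.divisors.card : ℂ)
          * (p.2.2.2.divisors.card : ℂ) * (lam p.2.1 * lam p.2.2.2)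
        = ∑ f ∈ (Nat.gcd p.2.1 p.2.2.2).divisors,
            χ (p.1 : ZMod q) * χ (p.2.2.1 : ZMod q) * (p.2.1.divisors.card : ℂ)
              * (p.2.2.2.divisors.card : ℂ)
              * (χ (f : ZMod q) * lam (p.2.1 * p.2.2.2 / f ^ 2)) := by
    rintro ⟨a, m, e, m'⟩ hp
    simp only [Finset.mem_filter, Finset.mem_product, Nat.mem_divisors] at hp
    obtain ⟨⟨-, ⟨hm, -⟩, -, ⟨hm', -⟩⟩, -⟩ := hp
    rw [hHecke m m' (Nat.pos_of_dvd_of_pos hm hN) (Nat.pos_of_dvd_of_pos hm' hN),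
      Finset.mul_sum]
  rw [Finset.sum_congr rfl expand, Finset.sum_sigma']
  refine Finset.sum_nbij'
    (fun s => (s.1.1, s.1.2.2.1, s.2, s.1.2.1 / s.2, s.1.2.2.2 / s.2))
    (fun p => ⟨(p.1, p.2.2.1 * p.2.2.2.1, p.2.1, p.2.2.1 * p.2.2.2.2), p.2.2.1⟩) ?_ ?_ ?_ ?_ ?_
  · rintro ⟨⟨a, m, e, m'⟩, f⟩ hs
    simp only [Finset.mem_sigma, Finset.mem_filter, Finset.mem_product, Nat.mem_divisors] at hs ⊢
    obtain ⟨⟨⟨⟨ha, -⟩, ⟨hm, -⟩, ⟨he, -⟩, ⟨hm', -⟩⟩, hprod⟩, hf, hg0⟩ := hs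
    have hfm : f ∣ m := hf.trans (Nat.gcd_dvd_left _ _)
    have hfm' : f ∣ m' := hf.trans (Nat.gcd_dvd_right _ _)
    have e1 : f * (m / f) = m := Nat.mul_div_cancel' hfm
    have e2 : f * (m' / f) = m' := Nat.mul_div_cancel' hfm'
    refine ⟨⟨⟨ha, hN.ne'⟩, ⟨he, hN.ne'⟩, ⟨hfm.trans hm, hN.ne'⟩,
      ⟨(Nat.div_dvd_of_dvd hfm).trans hm, hN.ne'⟩,
      ⟨(Nat.div_dvd_of_dvd hfm').trans hm', hN.ne'⟩⟩, ?_⟩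
    rw [show a * a * e * e * f * f * (m / f) * (m' / f)
        = a * a * (f * (m / f)) * e * e * (f * (m' / f)) by ring, e1, e2]
    exact hprod
  · rintro ⟨a, e, f, x, y⟩ hp
    simp only [Finset.mem_filter, Finset.mem_product, Nat.mem_divisors] at hp
    obtain ⟨⟨⟨ha, -⟩, ⟨he, -⟩, ⟨hf, -⟩, ⟨hx, -⟩, ⟨hy, -⟩⟩, hprod⟩ := hp
    have pf := Nat.pos_of_dvd_of_pos hf hN
    have px := Nat.pos_of_dvd_of_pos hx hN
    simp only [Finset.mem_sigma, Finset.mem_filter, Finset.mem_product, Nat.mem_divisors]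
    refine ⟨⟨⟨⟨ha, hN.ne'⟩, ⟨⟨a * a * e * e * f * y, by rw [← hprod]; ring⟩, hN.ne'⟩,
      ⟨he, hN.ne'⟩, ⟨⟨a * a * e * e * f * x, by rw [← hprod]; ring⟩, hN.ne'⟩⟩,
      by rw [← hprod]; ring⟩,
      Nat.dvd_gcd (dvd_mul_right f x) (dvd_mul_right f y), (Nat.mul_pos pf px).ne' ∘ ?_⟩
    exact fun h0 => Nat.eq_zero_of_gcd_eq_zero_left h0
  · rintro ⟨⟨a, m, e, m'⟩, f⟩ hs
    simp only [Finset.mem_sigma, Finset.mem_filter, Finset.mem_product, Nat.mem_divisors] at hs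
    obtain ⟨-, hf, -⟩ := hs
    have e1 := Nat.mul_div_cancel' (hf.trans (Nat.gcd_dvd_left m m'))
    have e2 := Nat.mul_div_cancel' (hf.trans (Nat.gcd_dvd_right m m'))
    simp only [e1, e2]
  · rintro ⟨a, e, f, x, y⟩ hp
    simp only [Finset.mem_filter, Finset.mem_product, Nat.mem_divisors] at hp
    obtain ⟨⟨-, -, ⟨hf, -⟩, -, -⟩, -⟩ := hp
    have pf := Nat.pos_of_dvd_of_pos hf hN
    simp only [Nat.mul_div_cancel_left _ pf]
  · rintro ⟨⟨a, m, e, m'⟩, f⟩ hs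
    simp only [Finset.mem_sigma, Finset.mem_filter, Finset.mem_product, Nat.mem_divisors] at hs
    obtain ⟨-, hf, hg0⟩ := hs
    have hfm : f ∣ m := hf.trans (Nat.gcd_dvd_left _ _)
    have hfm' : f ∣ m' := hf.trans (Nat.gcd_dvd_right _ _)
    have pf : 0 < f := Nat.pos_of_mem_divisors (Nat.mem_divisors.mpr ⟨hf, hg0⟩)
    have e0 : m * m' / f ^ 2 = (m / f) * (m' / f) := by
      conv_lhs => rw [← Nat.mul_div_cancel' hfm, ← Nat.mul_div_cancel' hfm']
      exact div_sq' f _ _ pf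
    have e1 : f * (m / f) = m := Nat.mul_div_cancel' hfm
    have e2 : f * (m' / f) = m' := Nat.mul_div_cancel' hfm'
    simp only [e0, e1, e2]
    ring

lemma divisor_count_mulC (f x : ℕ) (hf : 0 < f) (hx : 0 < x) :
    (((f * x).divisors.card : ℕ) : ℂ)
      = ∑ b ∈ (Nat.gcd f x).divisors,
          (moebius b : ℂ) * ((f / b).divisors.card : ℂ) * ((x / b).divisors.card : ℂ) := by
  have h := divisor_count_mul f x hf hx
  have h2 : (((f * x).divisors.card : ℤ) : ℂ)
      = ((∑ b ∈ (Nat.gcd f x).divisors,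
          (moebius b : ℤ) * (f / b).divisors.card * (x / b).divisors.card : ℤ) : ℂ) :=
    congrArg _ h
  push_cast at h2 ⊢
  exact h2

lemma stepD (q : ℕ) (χ : DirichletCharacter ℂ q) (lam : ℕ → ℂ) (N : ℕ) (hN : 0 < N) :
    ∑ p ∈ (N.divisors ×ˢ N.divisors ×ˢ N.divisors ×ˢ N.divisors ×ˢ N.divisors).filter
        (fun p : ℕ × ℕ × ℕ × ℕ × ℕ =>
          p.1 * p.1 * p.2.1 * p.2.1 * p.2.2.1 * p.2.2.1 * p.2.2.2.1 * p.2.2.2.2 = N),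
      χ (p.1 : ZMod q) * χ (p.2.1 : ZMod q) * χ (p.2.2.1 : ZMod q)
        * ((p.2.2.1 * p.2.2.2.1).divisors.card : ℂ) * ((p.2.2.1 * p.2.2.2.2).divisors.card : ℂ)
        * lam (p.2.2.2.1 * p.2.2.2.2) =
    ∑ p ∈ (N.divisors ×ˢ N.divisors ×ˢ N.divisors ×ˢ N.divisors ×ˢ N.divisors ×ˢ N.divisors
        ×ˢ N.divisors).filter
        (fun p : ℕ × ℕ × ℕ × ℕ × ℕ × ℕ × ℕ =>
          p.1 * p.1 * p.2.1 * p.2.1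
            * (Nat.lcm p.2.2.1 p.2.2.2.1 * p.2.2.2.2.1)
            * (Nat.lcm p.2.2.1 p.2.2.2.1 * p.2.2.2.2.1)
            * (p.2.2.1 * p.2.2.2.2.2.1) * (p.2.2.2.1 * p.2.2.2.2.2.2) = N),
      χ (p.1 : ZMod q) * χ (p.2.1 : ZMod q)
        * χ ((Nat.lcm p.2.2.1 p.2.2.2.1 * p.2.2.2.2.1 : ℕ) : ZMod q)
        * (moebius p.2.2.1 : ℂ) * (moebius p.2.2.2.1 : ℂ)
        * ((p.2.2.2.2.1 * Nat.lcm p.2.2.1 p.2.2.2.1 / p.2.2.1).divisors.card : ℂ)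
        * ((p.2.2.2.2.1 * Nat.lcm p.2.2.1 p.2.2.2.1 / p.2.2.2.1).divisors.card : ℂ)
        * (p.2.2.2.2.2.1.divisors.card : ℂ) * (p.2.2.2.2.2.2.divisors.card : ℂ)
        * lam (p.2.2.1 * p.2.2.2.1 * (p.2.2.2.2.2.1 * p.2.2.2.2.2.2)) := by
  have expand : ∀ p ∈ (N.divisors ×ˢ N.divisors ×ˢ N.divisors ×ˢ N.divisors ×ˢ N.divisors).filter
      (fun p : ℕ × ℕ × ℕ × ℕ × ℕ =>
        p.1 * p.1 * p.2.1 * p.2.1 * p.2.2.1 * p.2.2.1 * p.2.2.2.1 * p.2.2.2.2 = N),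
      χ (p.1 : ZMod q) * χ (p.2.1 : ZMod q) * χ (p.2.2.1 : ZMod q)
          * ((p.2.2.1 * p.2.2.2.1).divisors.card : ℂ)
          * ((p.2.2.1 * p.2.2.2.2).divisors.card : ℂ) * lam (p.2.2.2.1 * p.2.2.2.2)
        = ∑ w ∈ (Nat.gcd p.2.2.1 p.2.2.2.1).divisors ×ˢ (Nat.gcd p.2.2.1 p.2.2.2.2).divisors,
            (moebius w.1 : ℂ) * ((p.2.2.1 / w.1).divisors.card : ℂ)
              * ((p.2.2.2.1 / w.1).divisors.card : ℂ)
              * ((moebius w.2 : ℂ) * ((p.2.2.1 / w.2).divisors.card : ℂ)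
                * ((p.2.2.2.2 / w.2).divisors.card : ℂ))
              * (χ (p.1 : ZMod q) * χ (p.2.1 : ZMod q) * χ (p.2.2.1 : ZMod q)
                * lam (p.2.2.2.1 * p.2.2.2.2)) := by
    rintro ⟨a, e, f, x, y⟩ hp
    simp only [Finset.mem_filter, Finset.mem_product, Nat.mem_divisors] at hp
    obtain ⟨⟨-, -, ⟨hf, -⟩, ⟨hx, -⟩, ⟨hy, -⟩⟩, -⟩ := hp
    have pf := Nat.pos_of_dvd_of_pos hf hN
    have px := Nat.pos_of_dvd_of_pos hx hN
    have py := Nat.pos_of_dvd_of_pos hy hN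
    rw [show χ (a : ZMod q) * χ (e : ZMod q) * χ (f : ZMod q)
        * (((f * x).divisors.card : ℕ) : ℂ) * (((f * y).divisors.card : ℕ) : ℂ)
        * lam (x * y)
        = ((((f * x).divisors.card : ℕ) : ℂ) * (((f * y).divisors.card : ℕ) : ℂ))
          * (χ (a : ZMod q) * χ (e : ZMod q) * χ (f : ZMod q) * lam (x * y)) by ring,
      divisor_count_mulC f x pf px, divisor_count_mulC f y pf py, Finset.sum_mul_sum,
      ← Finset.sum_product', Finset.sum_mul]
  rw [Finset.sum_congr rfl expand, Finset.sum_sigma']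
  refine Finset.sum_nbij'
    (fun s => (s.1.1, s.1.2.1, s.2.1, s.2.2, s.1.2.2.1 / Nat.lcm s.2.1 s.2.2,
      s.1.2.2.2.1 / s.2.1, s.1.2.2.2.2 / s.2.2))
    (fun p => ⟨(p.1, p.2.1, Nat.lcm p.2.2.1 p.2.2.2.1 * p.2.2.2.2.1,
      p.2.2.1 * p.2.2.2.2.2.1, p.2.2.2.1 * p.2.2.2.2.2.2), (p.2.2.1, p.2.2.2.1)⟩) ?_ ?_ ?_ ?_ ?_
  · rintro ⟨⟨a, e, f, x, y⟩, b, c⟩ hs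
    simp only [Finset.mem_sigma, Finset.mem_filter, Finset.mem_product, Nat.mem_divisors] at hs ⊢
    obtain ⟨⟨⟨⟨ha, -⟩, ⟨he, -⟩, ⟨hf, -⟩, ⟨hx, -⟩, ⟨hy, -⟩⟩, hprod⟩, ⟨hb, -⟩, ⟨hc, -⟩⟩ := hs
    have hbf : b ∣ f := hb.trans (Nat.gcd_dvd_left _ _)
    have hbx : b ∣ x := hb.trans (Nat.gcd_dvd_right _ _)
    have hcf : c ∣ f := hc.trans (Nat.gcd_dvd_left _ _)
    have hcy : c ∣ y := hc.trans (Nat.gcd_dvd_right _ _)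
    have hL : Nat.lcm b c ∣ f := Nat.lcm_dvd hbf hcf
    have e1 : Nat.lcm b c * (f / Nat.lcm b c) = f := Nat.mul_div_cancel' hL
    have e2 : b * (x / b) = x := Nat.mul_div_cancel' hbx
    have e3 : c * (y / c) = y := Nat.mul_div_cancel' hcy
    refine ⟨⟨⟨ha, hN.ne'⟩, ⟨he, hN.ne'⟩, ⟨hbf.trans hf, hN.ne'⟩, ⟨hcf.trans hf, hN.ne'⟩,
      ⟨((Nat.div_dvd_of_dvd hL).trans hf), hN.ne'⟩,
      ⟨(Nat.div_dvd_of_dvd hbx).trans hx, hN.ne'⟩,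
      ⟨(Nat.div_dvd_of_dvd hcy).trans hy, hN.ne'⟩⟩, ?_⟩
    rw [e1, show b * (x / b) = x from e2, show c * (y / c) = y from e3]
    exact hprod
  · rintro ⟨a, e, b, c, d, x', y'⟩ hp
    simp only [Finset.mem_filter, Finset.mem_product, Nat.mem_divisors] at hp
    obtain ⟨⟨⟨ha, -⟩, ⟨he, -⟩, ⟨hb, -⟩, ⟨hc, -⟩, ⟨hd, -⟩, ⟨hx', -⟩, ⟨hy', -⟩⟩, hprod⟩ := hp
    have pb := Nat.pos_of_dvd_of_pos hb hN
    have pc := Nat.pos_of_dvd_of_pos hc hN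
    have pd := Nat.pos_of_dvd_of_pos hd hN
    have px' := Nat.pos_of_dvd_of_pos hx' hN
    have pL : 0 < Nat.lcm b c := Nat.pos_of_ne_zero (Nat.lcm_ne_zero pb.ne' pc.ne')
    simp only [Finset.mem_sigma, Finset.mem_filter, Finset.mem_product, Nat.mem_divisors]
    refine ⟨⟨⟨⟨ha, hN.ne'⟩, ⟨he, hN.ne'⟩,
      ⟨⟨a * a * e * e * (Nat.lcm b c * d) * (b * x') * (c * y'), by rw [← hprod]; try ring⟩, hN.ne'⟩,
      ⟨⟨a * a * e * e * (Nat.lcm b c * d) * (Nat.lcm b c * d) * (c * y'),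
        by rw [← hprod]; try ring⟩, hN.ne'⟩,
      ⟨⟨a * a * e * e * (Nat.lcm b c * d) * (Nat.lcm b c * d) * (b * x'),
        by rw [← hprod]; try ring⟩, hN.ne'⟩⟩, by rw [← hprod]; try ring⟩,
      ⟨Nat.dvd_gcd ((Nat.dvd_lcm_left b c).trans (dvd_mul_right _ d)) (dvd_mul_right b x'), ?_⟩,
      ⟨Nat.dvd_gcd ((Nat.dvd_lcm_right b c).trans (dvd_mul_right _ d)) (dvd_mul_right c y'), ?_⟩⟩
    · exact fun h0 => (Nat.mul_pos pL pd).ne' (Nat.eq_zero_of_gcd_eq_zero_left h0)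
    · exact fun h0 => (Nat.mul_pos pL pd).ne' (Nat.eq_zero_of_gcd_eq_zero_left h0)
  · rintro ⟨⟨a, e, f, x, y⟩, b, c⟩ hs
    simp only [Finset.mem_sigma, Finset.mem_filter, Finset.mem_product, Nat.mem_divisors] at hs
    obtain ⟨-, ⟨hb, -⟩, ⟨hc, -⟩⟩ := hs
    have hbf : b ∣ f := hb.trans (Nat.gcd_dvd_left _ _)
    have hbx : b ∣ x := hb.trans (Nat.gcd_dvd_right _ _)
    have hcf : c ∣ f := hc.trans (Nat.gcd_dvd_left _ _)
    have hcy : c ∣ y := hc.trans (Nat.gcd_dvd_right _ _)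
    have e1 := Nat.mul_div_cancel' (Nat.lcm_dvd hbf hcf)
    have e2 := Nat.mul_div_cancel' hbx
    have e3 := Nat.mul_div_cancel' hcy
    simp only [e1, e2, e3]
  · rintro ⟨a, e, b, c, d, x', y'⟩ hp
    simp only [Finset.mem_filter, Finset.mem_product, Nat.mem_divisors] at hp
    obtain ⟨⟨-, -, ⟨hb, -⟩, ⟨hc, -⟩, -, -, -⟩, -⟩ := hp
    have pb := Nat.pos_of_dvd_of_pos hb hN
    have pc := Nat.pos_of_dvd_of_pos hc hN
    have pL : 0 < Nat.lcm b c := Nat.pos_of_ne_zero (Nat.lcm_ne_zero pb.ne' pc.ne')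
    simp only [Nat.mul_div_cancel_left _ pL, Nat.mul_div_cancel_left _ pb,
      Nat.mul_div_cancel_left _ pc]
  · rintro ⟨⟨a, e, f, x, y⟩, b, c⟩ hs
    simp only [Finset.mem_sigma, Finset.mem_filter, Finset.mem_product, Nat.mem_divisors] at hs
    obtain ⟨⟨-, hprod⟩, ⟨hb, -⟩, ⟨hc, -⟩⟩ := hs
    have hbf : b ∣ f := hb.trans (Nat.gcd_dvd_left _ _)
    have hbx : b ∣ x := hb.trans (Nat.gcd_dvd_right _ _)
    have hcf : c ∣ f := hc.trans (Nat.gcd_dvd_left _ _)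
    have hcy : c ∣ y := hc.trans (Nat.gcd_dvd_right _ _)
    have hL : Nat.lcm b c ∣ f := Nat.lcm_dvd hbf hcf
    have e1 : Nat.lcm b c * (f / Nat.lcm b c) = f := Nat.mul_div_cancel' hL
    have e1' : f / Nat.lcm b c * Nat.lcm b c = f := by rw [mul_comm]; exact e1
    have e4 : b * c * (x / b * (y / c)) = x * y := by
      rw [show b * c * (x / b * (y / c)) = (b * (x / b)) * (c * (y / c)) by ring,
        Nat.mul_div_cancel' hbx, Nat.mul_div_cancel' hcy]
    simp only [e1, e1', e4]
    ring

lemma stepE (q : ℕ) (χ : DirichletCharacter ℂ q) (lam : ℕ → ℂ) (N : ℕ) (hN : 0 < N) :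
    ∑ p ∈ (N.divisors ×ˢ N.divisors ×ˢ N.divisors ×ˢ N.divisors ×ˢ N.divisors).filter
        (fun p : ℕ × ℕ × ℕ × ℕ × ℕ =>
          p.1 * p.2.1 * Nat.lcm p.1 p.2.1 ^ 2 * p.2.2.1 ^ 2 * p.2.2.2.1 ^ 2 * p.2.2.2.2 = N),
      χ ((p.2.2.2.1 * Nat.lcm p.1 p.2.1 * p.2.2.1 : ℕ) : ZMod q) *
        (moebius p.1 : ℂ) * (moebius p.2.1 : ℂ) *
        (((p.2.2.1 * Nat.lcm p.1 p.2.1 / p.1).divisors.card : ℂ)) *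
        (((p.2.2.1 * Nat.lcm p.1 p.2.1 / p.2.1).divisors.card : ℂ)) *
        ((p.2.2.2.1.divisors.card : ℂ)) *
        lam (p.1 * p.2.1 * p.2.2.2.2) * (sigma4 p.2.2.2.2 : ℂ) =
    ∑ p ∈ (N.divisors ×ˢ N.divisors ×ˢ N.divisors ×ˢ N.divisors ×ˢ N.divisors ×ˢ N.divisors
        ×ˢ N.divisors).filter
        (fun p : ℕ × ℕ × ℕ × ℕ × ℕ × ℕ × ℕ =>
          p.1 * p.1 * p.2.1 * p.2.1
            * (Nat.lcm p.2.2.1 p.2.2.2.1 * p.2.2.2.2.1)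
            * (Nat.lcm p.2.2.1 p.2.2.2.1 * p.2.2.2.2.1)
            * (p.2.2.1 * p.2.2.2.2.2.1) * (p.2.2.2.1 * p.2.2.2.2.2.2) = N),
      χ (p.1 : ZMod q) * χ (p.2.1 : ZMod q)
        * χ ((Nat.lcm p.2.2.1 p.2.2.2.1 * p.2.2.2.2.1 : ℕ) : ZMod q)
        * (moebius p.2.2.1 : ℂ) * (moebius p.2.2.2.1 : ℂ)
        * ((p.2.2.2.2.1 * Nat.lcm p.2.2.1 p.2.2.2.1 / p.2.2.1).divisors.card : ℂ)
        * ((p.2.2.2.2.1 * Nat.lcm p.2.2.1 p.2.2.2.1 / p.2.2.2.1).divisors.card : ℂ)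
        * (p.2.2.2.2.2.1.divisors.card : ℂ) * (p.2.2.2.2.2.2.divisors.card : ℂ)
        * lam (p.2.2.1 * p.2.2.2.1 * (p.2.2.2.2.2.1 * p.2.2.2.2.2.2)) := by
  have expand : ∀ p ∈ (N.divisors ×ˢ N.divisors ×ˢ N.divisors ×ˢ N.divisors
      ×ˢ N.divisors).filter
      (fun p : ℕ × ℕ × ℕ × ℕ × ℕ =>
        p.1 * p.2.1 * Nat.lcm p.1 p.2.1 ^ 2 * p.2.2.1 ^ 2 * p.2.2.2.1 ^ 2 * p.2.2.2.2 = N),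
      χ ((p.2.2.2.1 * Nat.lcm p.1 p.2.1 * p.2.2.1 : ℕ) : ZMod q) *
        (moebius p.1 : ℂ) * (moebius p.2.1 : ℂ) *
        (((p.2.2.1 * Nat.lcm p.1 p.2.1 / p.1).divisors.card : ℂ)) *
        (((p.2.2.1 * Nat.lcm p.1 p.2.1 / p.2.1).divisors.card : ℂ)) *
        ((p.2.2.2.1.divisors.card : ℂ)) *
        lam (p.1 * p.2.1 * p.2.2.2.2) * (sigma4 p.2.2.2.2 : ℂ)
      = ∑ w ∈ Nat.divisorsAntidiagonal p.2.2.2.1 ×ˢ Nat.divisorsAntidiagonal p.2.2.2.2,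
          (w.2.1.divisors.card : ℂ) * (w.2.2.divisors.card : ℂ)
            * (χ ((p.2.2.2.1 * Nat.lcm p.1 p.2.1 * p.2.2.1 : ℕ) : ZMod q) *
              (moebius p.1 : ℂ) * (moebius p.2.1 : ℂ) *
              (((p.2.2.1 * Nat.lcm p.1 p.2.1 / p.1).divisors.card : ℂ)) *
              (((p.2.2.1 * Nat.lcm p.1 p.2.1 / p.2.1).divisors.card : ℂ)) *
              lam (p.1 * p.2.1 * p.2.2.2.2)) := by
    rintro ⟨b, c, d, j, n⟩ hp
    simp only [Finset.mem_filter, Finset.mem_product, Nat.mem_divisors] at hp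
    obtain ⟨⟨-, -, -, ⟨hj, -⟩, ⟨hn, -⟩⟩, -⟩ := hp
    have pn := Nat.pos_of_dvd_of_pos hn hN
    have hsig : ((sigma4 n : ℕ) : ℂ)
        = ∑ w2 ∈ Nat.divisorsAntidiagonal n,
            (w2.1.divisors.card : ℂ) * (w2.2.divisors.card : ℂ) := by
      rw [sigma4_eq n pn]; push_cast; rfl
    have htau : ((j.divisors.card : ℕ) : ℂ)
        = ∑ w1 ∈ Nat.divisorsAntidiagonal j, (1 : ℂ) := by
      rw [Finset.sum_const, card_DA, nsmul_eq_mul, mul_one]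
    rw [show χ ((j * Nat.lcm b c * d : ℕ) : ZMod q) * (moebius b : ℂ) * (moebius c : ℂ)
        * ((d * Nat.lcm b c / b).divisors.card : ℂ) * ((d * Nat.lcm b c / c).divisors.card : ℂ)
        * (j.divisors.card : ℂ) * lam (b * c * n) * ((sigma4 n : ℕ) : ℂ)
      = ((j.divisors.card : ℕ) : ℂ) * ((sigma4 n : ℕ) : ℂ)
        * (χ ((j * Nat.lcm b c * d : ℕ) : ZMod q) * (moebius b : ℂ) * (moebius c : ℂ)
          * ((d * Nat.lcm b c / b).divisors.card : ℂ)
          * ((d * Nat.lcm b c / c).divisors.card : ℂ) * lam (b * c * n)) by push_cast; ring,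
      htau, hsig, Finset.sum_mul_sum, ← Finset.sum_product', Finset.sum_mul]
    exact Finset.sum_congr rfl (fun w _ => by ring)
  rw [Finset.sum_congr rfl expand, Finset.sum_sigma']
  refine Finset.sum_nbij'
    (fun s => (s.2.1.1, s.2.1.2, s.1.1, s.1.2.1, s.1.2.2.1, s.2.2.1, s.2.2.2))
    (fun p => ⟨(p.2.2.1, p.2.2.2.1, p.2.2.2.2.1, p.1 * p.2.1,
      p.2.2.2.2.2.1 * p.2.2.2.2.2.2), ((p.1, p.2.1), (p.2.2.2.2.2.1, p.2.2.2.2.2.2))⟩)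
    ?_ ?_ ?_ ?_ ?_
  · rintro ⟨⟨b, c, d, j, n⟩, ⟨a, e⟩, ⟨x, y⟩⟩ hs
    simp only [Finset.mem_sigma, Finset.mem_filter, Finset.mem_product, Nat.mem_divisors,
      Nat.mem_divisorsAntidiagonal] at hs ⊢
    obtain ⟨⟨⟨⟨hb, -⟩, ⟨hc, -⟩, ⟨hd, -⟩, ⟨hj, -⟩, ⟨hn, -⟩⟩, hprod⟩, ⟨hae, -⟩, ⟨hxy, -⟩⟩ := hs
    subst hae hxy
    refine ⟨⟨⟨(dvd_mul_right a e).trans hj, hN.ne'⟩, ⟨(dvd_mul_left e a).trans hj, hN.ne'⟩,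
      ⟨hb, hN.ne'⟩, ⟨hc, hN.ne'⟩, ⟨hd, hN.ne'⟩, ⟨(dvd_mul_right x y).trans hn, hN.ne'⟩,
      ⟨(dvd_mul_left y x).trans hn, hN.ne'⟩⟩, by rw [← hprod]; try ring⟩
  · rintro ⟨a, e, b, c, d, x, y⟩ hp
    simp only [Finset.mem_filter, Finset.mem_product, Nat.mem_divisors] at hp
    obtain ⟨⟨⟨ha, -⟩, ⟨he, -⟩, ⟨hb, -⟩, ⟨hc, -⟩, ⟨hd, -⟩, ⟨hx, -⟩, ⟨hy, -⟩⟩, hprod⟩ := hp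
    have pa := Nat.pos_of_dvd_of_pos ha hN
    have pe := Nat.pos_of_dvd_of_pos he hN
    have px := Nat.pos_of_dvd_of_pos hx hN
    have py := Nat.pos_of_dvd_of_pos hy hN
    simp only [Finset.mem_sigma, Finset.mem_filter, Finset.mem_product, Nat.mem_divisors,
      Nat.mem_divisorsAntidiagonal]
    refine ⟨⟨⟨⟨hb, hN.ne'⟩, ⟨hc, hN.ne'⟩, ⟨hd, hN.ne'⟩,
      ⟨⟨a * e * (Nat.lcm b c * d) * (Nat.lcm b c * d) * b * c * (x * y),
        by rw [← hprod]; try ring⟩, hN.ne'⟩,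
      ⟨⟨a * a * e * e * (Nat.lcm b c * d) * (Nat.lcm b c * d) * b * c,
        by rw [← hprod]; try ring⟩, hN.ne'⟩⟩, by rw [← hprod]; try ring⟩,
      ⟨trivial, (Nat.mul_pos pa pe).ne'⟩, ⟨trivial, (Nat.mul_pos px py).ne'⟩⟩
  · rintro ⟨⟨b, c, d, j, n⟩, ⟨a, e⟩, ⟨x, y⟩⟩ hs
    simp only [Finset.mem_sigma, Finset.mem_filter, Finset.mem_product, Nat.mem_divisors,
      Nat.mem_divisorsAntidiagonal] at hs
    obtain ⟨-, ⟨hae, -⟩, ⟨hxy, -⟩⟩ := hs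
    subst hae hxy; rfl
  · rintro ⟨a, e, b, c, d, x, y⟩ _; rfl
  · rintro ⟨⟨b, c, d, j, n⟩, ⟨a, e⟩, ⟨x, y⟩⟩ hs
    simp only [Finset.mem_sigma, Finset.mem_filter, Finset.mem_product, Nat.mem_divisors,
      Nat.mem_divisorsAntidiagonal] at hs
    obtain ⟨-, ⟨hae, -⟩, ⟨hxy, -⟩⟩ := hs
    subst hae hxy
    have hcast : ((a * e * Nat.lcm b c * d : ℕ) : ZMod q)
        = ((a : ℕ) : ZMod q) * ((e : ℕ) : ZMod q) * ((Nat.lcm b c * d : ℕ) : ZMod q) := by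
      push_cast; ring
    simp only []
    rw [hcast, map_mul, map_mul]
    ring


/-- If `λ : ℕ₊ → ℂ` satisfies the Hecke relation with respect to a Dirichlet
character `χ` mod `q` (extended by zero), then for every positive integer `N`,
`∑_{n₁ n₂ n₃ n₄ = N} λ(n₁) λ(n₂) λ(n₃) λ(n₄)
  = ∑_{b c [b,c]² d² j² n = N} χ(j [b,c] d) μ(b) μ(c) τ(d [b,c]/b) τ(d [b,c]/c) τ(j)
      λ(b c n) σ₄(n)`. -/
theorem hecke_fourth_sum_expanded (q : ℕ) (hq : 0 < q) (χ : DirichletCharacter ℂ q)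
    (lam : ℕ → ℂ)
    (hHecke : ∀ m n : ℕ, 0 < m → 0 < n →
      lam m * lam n = ∑ d ∈ (Nat.gcd m n).divisors, χ (d : ZMod q) * lam (m * n / d ^ 2))
    (N : ℕ) (hN : 0 < N) :
    ∑ p ∈ (Finset.Icc 1 N ×ˢ Finset.Icc 1 N ×ˢ Finset.Icc 1 N ×ˢ Finset.Icc 1 N).filter
        (fun p => p.1 * p.2.1 * p.2.2.1 * p.2.2.2 = N),
      lam p.1 * lam p.2.1 * lam p.2.2.1 * lam p.2.2.2 =
    ∑ p ∈ (N.divisors ×ˢ N.divisors ×ˢ N.divisors ×ˢ N.divisors ×ˢ N.divisors).filter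
        (fun p : ℕ × ℕ × ℕ × ℕ × ℕ =>
          p.1 * p.2.1 * Nat.lcm p.1 p.2.1 ^ 2 * p.2.2.1 ^ 2 * p.2.2.2.1 ^ 2 * p.2.2.2.2 = N),
      χ ((p.2.2.2.1 * Nat.lcm p.1 p.2.1 * p.2.2.1 : ℕ) : ZMod q) *
        (moebius p.1 : ℂ) * (moebius p.2.1 : ℂ) *
        (((p.2.2.1 * Nat.lcm p.1 p.2.1 / p.1).divisors.card : ℂ)) *
        (((p.2.2.1 * Nat.lcm p.1 p.2.1 / p.2.1).divisors.card : ℂ)) *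
        ((p.2.2.2.1.divisors.card : ℂ)) *
        lam (p.1 * p.2.1 * p.2.2.2.2) * (sigma4 p.2.2.2.2 : ℂ) := by
  rw [quad_filter N hN]
  calc
    _ = _ := stepA q χ lam hHecke N hN
    _ = _ := (stepB q χ lam N hN).symm
    _ = _ := stepC q χ lam hHecke N hN
    _ = _ := stepD q χ lam N hN
    _ = _ := (stepE q χ lam N hN).symm
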